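/- Every nonnegative column-stochastic C × d matrix factors through the layers of a pyramidal network: let L ≥ 1 and n_0 = d, n_L = C, with n_ℓ ≥ C for 1 ≤ ℓ ≤ L−1. Then for every matrix w' ∈ ℝ^{C×d} with nonnegative entries and all column sums equal to 1, there exist matrices w^(ℓ) ∈ ℝ^{n_ℓ × n_{ℓ−1}} (ℓ = 1,…,L), each with nonnegative entries and all column sums equal to 1, such that w' = w^(L)⋯w^(1). (Second part of Lemma 2: every action distribution of the congestion game is realized by some weight configuration.) -/

import Mathlib

open Finset

/-- The product `w^(L) ⋯ w^(1)` of the weight matrices of an `L`-layer linear network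
with layer widths `n 0, n 1, …, n L`. -/
noncomputable def netMat : (L : ℕ) → (n : ℕ → ℕ) →
    (∀ ℓ : Fin L, Matrix (Fin (n (↑ℓ + 1))) (Fin (n ↑ℓ)) ℝ) →
    Matrix (Fin (n L)) (Fin (n 0)) ℝ
  | 0, _, _ => 1
  | L + 1, n, W =>
      (W ⟨L, Nat.lt_succ_self L⟩ : Matrix (Fin (n (L + 1))) (Fin (n L)) ℝ) *
        netMat L n (fun ℓ : Fin L => (W ℓ.castSucc : Matrix (Fin (n (↑ℓ + 1))) (Fin (n ↑ℓ)) ℝ))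

/-- Row index used by the "routing" layers: `j ↦ j` if `j < C`, else `j ↦ 0`. -/
def gval (C j : ℕ) : ℕ := if j < C then j else 0

lemma gval_lt {C j : ℕ} (hC : 1 ≤ C) : gval C j < C := by
  unfold gval; split <;> omega

/-- The explicit weight matrices: layer `0` embeds `A` in the top `C` rows, and
every later layer routes coordinate `j` to `gval C j`. -/
noncomputable def Wdef (L : ℕ) (n : ℕ → ℕ) (C : ℕ) (A : Matrix (Fin C) (Fin (n 0)) ℝ) :
    ∀ ℓ : Fin L, Matrix (Fin (n (↑ℓ + 1))) (Fin (n ↑ℓ)) ℝ :=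
  fun ℓ k j =>
    if hℓ : (ℓ : ℕ) = 0 then
      (if hk : (k : ℕ) < C then A ⟨k, hk⟩ (Fin.cast (congrArg n hℓ) j) else 0)
    else
      (if (k : ℕ) = gval C (j : ℕ) then 1 else 0)

/-- Summing a function supported in the first `C` coordinates of `Fin m`. -/
lemma sum_trunc {m C : ℕ} (h : C ≤ m) (f : Fin C → ℝ) :
    ∑ k : Fin m, (if hk : (k : ℕ) < C then f ⟨k, hk⟩ else 0) = ∑ j : Fin C, f j := by
  have key : ∀ (g : ℕ → ℝ), (∀ i, C ≤ i → g i = 0) →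
      ∑ i ∈ Finset.range m, g i = ∑ i ∈ Finset.range C, g i := by
    intro g hg
    rw [Finset.range_eq_Ico, Finset.range_eq_Ico,
      ← Finset.sum_Ico_consecutive (m := 0) (n := C) (k := m) _ (Nat.zero_le C) h]
    have : ∑ i ∈ Finset.Ico C m, g i = 0 :=
      Finset.sum_eq_zero fun i hi => hg i (Finset.mem_Ico.mp hi).1
    rw [this, add_zero]
  set g : ℕ → ℝ := fun i => if hi : i < C then f ⟨i, hi⟩ else 0 with hgdef
  have h1 : ∑ k : Fin m, (if hk : (k : ℕ) < C then f ⟨k, hk⟩ else 0) = ∑ i ∈ Finset.range m, g i := by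
    rw [← Fin.sum_univ_eq_sum_range g m]
  have h2 : ∑ j : Fin C, f j = ∑ i ∈ Finset.range C, g i := by
    rw [← Fin.sum_univ_eq_sum_range g C]
    apply Finset.sum_congr rfl
    intro j _
    simp [hgdef, j.isLt]
  rw [h1, h2, key g (fun i hi => by simp [hgdef]; omega)]

theorem stmt_7 (L : ℕ) (hL : 1 ≤ L) (n : ℕ → ℕ) (d C : ℕ) (hd : 1 ≤ d) (hC : 1 ≤ C)
    (hn0 : n 0 = d) (hnL : n L = C)
    (hpyr : ∀ ℓ, 1 ≤ ℓ → ℓ < L → C ≤ n ℓ)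
    (w' : Matrix (Fin (n L)) (Fin (n 0)) ℝ)
    (hpos : ∀ k i, 0 ≤ w' k i) (hsum : ∀ i, ∑ k, w' k i = 1) :
    ∃ W : (∀ ℓ : Fin L, Matrix (Fin (n (↑ℓ + 1))) (Fin (n ↑ℓ)) ℝ),
      (∀ ℓ k i, 0 ≤ W ℓ k i) ∧ (∀ ℓ i, ∑ k, W ℓ k i = 1) ∧ netMat L n W = w' := by
  subst hnL hn0
  -- key induction: the product of the explicit matrices equals the embedded matrix
  have key : ∀ (M : ℕ) (hM : 1 ≤ M) (hmid : ∀ ℓ, 1 ≤ ℓ → ℓ ≤ M → n L ≤ n ℓ),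
      ∀ k i, netMat M n (Wdef M n (n L) w') k i =
        (if hk : (k : ℕ) < n L then w' ⟨k, hk⟩ i else 0) := by
    intro M
    induction M with
    | zero => omega
    | succ M ih =>
      intro _ hmid k i
      rcases Nat.eq_zero_or_pos M with hM0 | hM1
      · subst hM0
        show ((Wdef 1 n (n L) w') ⟨0, _⟩ * netMat 0 n _) k i = _
        rw [show netMat 0 n _ = 1 from rfl, Matrix.mul_one]
        simp [Wdef]
      · -- restricted Wdef is Wdef
        have hres : (fun ℓ : Fin M => (Wdef (M+1) n (n L) w') ℓ.castSucc) =
            Wdef M n (n L) w' := rfl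
        show ((Wdef (M+1) n (n L) w') ⟨M, _⟩ * netMat M n _) k i = _
        rw [hres]
        have hmid' : ∀ ℓ, 1 ≤ ℓ → ℓ ≤ M → n L ≤ n ℓ := fun ℓ h1 h2 => hmid ℓ h1 (by omega)
        rw [Matrix.mul_apply]
        have hterm : ∀ j : Fin (n M),
            (Wdef (M+1) n (n L) w') ⟨M, Nat.lt_succ_self M⟩ k j * netMat M n (Wdef M n (n L) w') j i =
            (if hj : (j : ℕ) < n L then
              (if (k : ℕ) = (j : ℕ) then w' ⟨j, hj⟩ i else 0) else 0) := by
          intro j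
          rw [ih hM1 hmid' j i]
          simp only [Wdef]
          rw [dif_neg (show ¬ (((⟨M, Nat.lt_succ_self M⟩ : Fin (M+1)) : ℕ) = 0) by simp; omega)]
          by_cases hj : (j : ℕ) < n L
          · rw [dif_pos hj, dif_pos hj]
            unfold gval
            rw [if_pos hj]
            by_cases hk : (k : ℕ) = (j : ℕ)
            · rw [if_pos hk, if_pos hk, one_mul]
            · rw [if_neg hk, if_neg hk, zero_mul]
          · rw [dif_neg hj, dif_neg hj, mul_zero]
        rw [Finset.sum_congr rfl (fun j _ => hterm j)]
        have hCM : n L ≤ n M := hmid' M hM1 le_rfl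
        rw [sum_trunc hCM (fun j => if (k : ℕ) = (j : ℕ) then w' j i else 0)]
        by_cases hk : (k : ℕ) < n L
        · rw [dif_pos hk]
          rw [Finset.sum_eq_single (⟨(k : ℕ), hk⟩ : Fin (n L))]
          · simp
          · intro b _ hb
            rw [if_neg]
            intro hcontra
            exact hb (by ext; simp [← hcontra])
          · intro hmem; exact absurd (Finset.mem_univ _) hmem
        · rw [dif_neg hk]
          apply Finset.sum_eq_zero
          intro j _
          rw [if_neg]
          intro hcontra
          exact hk (hcontra ▸ j.isLt)
  have hmid : ∀ ℓ, 1 ≤ ℓ → ℓ ≤ L → n L ≤ n ℓ := by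
    intro ℓ h1 h2
    rcases eq_or_lt_of_le h2 with h | h
    · subst h; exact le_rfl
    · exact hpyr ℓ h1 h
  refine ⟨Wdef L n (n L) w', ?_, ?_, ?_⟩
  · intro ℓ k i
    simp only [Wdef]
    split
    · split
      · exact hpos _ _
      · exact le_rfl
    · split
      · exact zero_le_one
      · exact le_rfl
  · intro ℓ i
    simp only [Wdef]
    by_cases hℓ : (ℓ : ℕ) = 0
    · simp only [dif_pos hℓ]
      rw [sum_trunc (by
        have := hmid 1 le_rfl (by omega)
        have : n L ≤ n ((ℓ : ℕ) + 1) := by rw [hℓ]; exact hmid 1 le_rfl (by omega)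
        exact this) (fun k => w' k (Fin.cast (congrArg n hℓ) i))]
      exact hsum _
    · simp only [dif_neg hℓ]
      have hlt : gval (n L) (i : ℕ) < n ((ℓ : ℕ) + 1) :=
        lt_of_lt_of_le (gval_lt hC) (hmid ((ℓ : ℕ) + 1) (by omega) (by omega))
      rw [Finset.sum_eq_single (⟨gval (n L) (i : ℕ), hlt⟩ : Fin (n ((ℓ : ℕ) + 1)))]
      · simp
      · intro b _ hb
        rw [if_neg]
        intro hcontra
        exact hb (by ext; simpa using hcontra)
      · intro hmem; exact absurd (Finset.mem_univ _) hmem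
  · ext k i
    rw [key L hL hmid k i, dif_pos k.isLt]
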